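/- Let X ∈ ℝ^{m×n}, W₁ ∈ ℝ^{k×m}, W₂ ∈ ℝ^{m×k}, and let e_n ∈ ℝ^n be the all-ones vector. Set X̄ = X − (1/n)X e_n e_nᵀ (the column-mean-centered data). Then for every b ∈ ℝ^m, ‖X − W₂W₁X − b e_nᵀ‖_F² ≥ ‖X̄ − W₂W₁X̄‖_F², with equality if and only if b = (1/n)(I_m − W₂W₁)X e_n. Hence a linear autoencoder with optimal bias on X is equivalent to a linear autoencoder without bias on the mean-centered data X̄. -/

import Mathlib

open Matrix

/-- A linear autoencoder with bias is equivalent to a bias-free one on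
mean-centered data: for all `b`,
`‖X − W₂W₁X − b eₙᵀ‖_F² ≥ ‖X̄ − W₂W₁X̄‖_F²` where `X̄ = X − (1/n)X eₙ eₙᵀ`,
with equality iff `b = (1/n)(I − W₂W₁)X eₙ`. -/
theorem bias_equals_mean_centering {m n k : ℕ} (hn : 0 < n)
    (X : Matrix (Fin m) (Fin n) ℝ)
    (W1 : Matrix (Fin k) (Fin m) ℝ) (W2 : Matrix (Fin m) (Fin k) ℝ)
    (e : Matrix (Fin n) (Fin 1) ℝ) (he : e = fun _ _ => 1)
    (Xbar : Matrix (Fin m) (Fin n) ℝ)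
    (hXbar : Xbar = X - (n : ℝ)⁻¹ • (X * e * eᵀ)) :
    ∀ b : Matrix (Fin m) (Fin 1) ℝ,
      (Matrix.trace ((Xbar - W2 * W1 * Xbar)ᵀ * (Xbar - W2 * W1 * Xbar)) ≤
          Matrix.trace ((X - W2 * W1 * X - b * eᵀ)ᵀ * (X - W2 * W1 * X - b * eᵀ))) ∧
        (Matrix.trace ((X - W2 * W1 * X - b * eᵀ)ᵀ * (X - W2 * W1 * X - b * eᵀ)) =
            Matrix.trace ((Xbar - W2 * W1 * Xbar)ᵀ * (Xbar - W2 * W1 * Xbar)) ↔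
          b = (n : ℝ)⁻¹ • ((1 - W2 * W1) * X * e)) := by
  intro b
  have hne : (n : ℝ) ≠ 0 := by positivity
  have hee : eᵀ * e = (n : ℝ) • (1 : Matrix (Fin 1) (Fin 1) ℝ) := by
    subst he
    change (Matrix.of fun (_ : Fin n) (_ : Fin 1) => (1:ℝ))ᵀ * Matrix.of (fun (_ : Fin n) (_ : Fin 1) => (1:ℝ)) = _
    ext i j
    fin_cases i; fin_cases j
    simp [Matrix.mul_apply]
  set A := X - W2 * W1 * X with hA
  set bstar := (n : ℝ)⁻¹ • ((1 - W2 * W1) * X * e) with hbstar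
  have hAb : bstar = (n : ℝ)⁻¹ • (A * e) := by
    rw [hbstar, hA]
    congr 1
    rw [Matrix.sub_mul, Matrix.one_mul, Matrix.sub_mul]
  set B := A - bstar * eᵀ with hBdef
  have hB : Xbar - W2 * W1 * Xbar = B := by
    rw [hBdef, hAb, hXbar, hA]
    rw [Matrix.smul_mul]
    simp only [Matrix.mul_sub, Matrix.sub_mul, Matrix.mul_smul, Matrix.smul_mul, smul_sub,
      Matrix.mul_assoc]
    abel
  have hBe : B * e = 0 := by
    rw [hBdef, hAb, Matrix.sub_mul, Matrix.smul_mul, Matrix.smul_mul, Matrix.mul_assoc, hee,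
      Matrix.mul_smul, Matrix.mul_one, smul_smul, inv_mul_cancel₀ hne, one_smul, sub_self]
  set d := b - bstar with hd
  have hXeq : X - W2 * W1 * X - b * eᵀ = B - d * eᵀ := by
    rw [hBdef, hd, Matrix.sub_mul, hA]
    abel
  set S := Matrix.trace (dᵀ * d) with hSdef
  have hS : S = ∑ i, (d i 0) ^ 2 := by
    rw [hSdef]
    simp [Matrix.trace, Matrix.mul_apply, Matrix.diag, sq, Fin.sum_univ_one]
  have hS0 : 0 ≤ S := by rw [hS]; positivity
  have hSiff : S = 0 ↔ d = 0 := by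
    rw [hS]
    constructor
    · intro h
      ext i j
      have := (Finset.sum_eq_zero_iff_of_nonneg (fun i _ => sq_nonneg (d i 0))).mp h i
        (Finset.mem_univ i)
      have hz : d i 0 = 0 := by
        have := pow_eq_zero_iff (n := 2) (by norm_num) |>.mp this
        exact this
      have hj : j = 0 := Subsingleton.elim _ _
      rw [hj]; simpa using hz
    · intro h; rw [h]; simp
  have h1 : Matrix.trace (Bᵀ * (d * eᵀ)) = 0 := by
    rw [← Matrix.mul_assoc, Matrix.trace_mul_comm, ← Matrix.mul_assoc, ← Matrix.transpose_mul,
      hBe]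
    simp
  have h2 : Matrix.trace ((d * eᵀ)ᵀ * B) = 0 := by
    rw [← Matrix.trace_transpose, Matrix.transpose_mul, Matrix.transpose_transpose, h1]
  have h3 : Matrix.trace ((d * eᵀ)ᵀ * (d * eᵀ)) = (n : ℝ) * S := by
    rw [Matrix.transpose_mul, Matrix.transpose_transpose, Matrix.mul_assoc,
      Matrix.trace_mul_comm]
    have : dᵀ * (d * eᵀ) * e = dᵀ * d * (eᵀ * e) := by simp [Matrix.mul_assoc]
    rw [this, hee, Matrix.mul_smul, Matrix.mul_one, Matrix.trace_smul, smul_eq_mul, hSdef]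
  have key : Matrix.trace ((X - W2 * W1 * X - b * eᵀ)ᵀ * (X - W2 * W1 * X - b * eᵀ)) =
      Matrix.trace ((Xbar - W2 * W1 * Xbar)ᵀ * (Xbar - W2 * W1 * Xbar)) + (n : ℝ) * S := by
    rw [hXeq, hB]
    simp only [Matrix.transpose_sub, Matrix.sub_mul, Matrix.mul_sub, Matrix.trace_sub]
    rw [h1, h2, h3]
    ring
  have hnS : 0 ≤ (n : ℝ) * S := by positivity
  constructor
  · linarith [key]
  · rw [key]
    constructor
    · intro h
      have hS0' : (n : ℝ) * S = 0 := by linarith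
      have : S = 0 := by
        rcases mul_eq_zero.mp hS0' with h' | h'
        · exact absurd h' hne
        · exact h'
      have hd0 : b - bstar = 0 := hSiff.mp this
      exact sub_eq_zero.mp hd0
    · intro h
      have : d = 0 := by rw [hd, h, hbstar]; simp
      have : S = 0 := hSiff.mpr this
      rw [this]; ring
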